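/- arXiv:1702.04493 — 2 statements merged into one kernel-verified Lean document; each statement's English description precedes it below -/
import Mathlib

section
/- Let α > 2, δ = 2/α, and let g ≥ 0, s > 0, 0 < κ < R be reals. Then 2∫_κ^R (1 − e^{−s g x^{−α}}) x dx = R² − κ² + δκ²·E_{1+δ}(sκ^{−α}g) − δR²·E_{1+δ}(sR^{−α}g), where E_p(z) = ∫_1^∞ e^{−zt} t^{−p} dt is the generalized exponential integral. -/
open Real MeasureTheory intervalIntegral

/-- The generalized exponential integral `E_p(z) = ∫_1^∞ e^{−zt} t^{−p} dt`. -/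
noncomputable def genExpInt (p z : ℝ) : ℝ :=
  ∫ t in Set.Ioi (1 : ℝ), Real.exp (-z * t) * t ^ (-p)

lemma exp_mul_intervalIntegrable (α c b : ℝ) (hc : 0 ≤ c) (hb : 0 < b) :
    IntervalIntegrable (fun y : ℝ => Real.exp (-c * y ^ (-α)) * y) volume 0 b := by
  rw [intervalIntegrable_iff_integrableOn_Ioc_of_le hb.le]
  have hmeas : Measurable fun y : ℝ => Real.exp (-c * y ^ (-α)) * y := by
    fun_prop
  apply Integrable.mono' (g := fun _ : ℝ => b)
  · exact integrableOn_const measure_Ioc_lt_top.ne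
  · exact hmeas.aestronglyMeasurable
  · filter_upwards [ae_restrict_mem measurableSet_Ioc] with y hy
    have hy0 : 0 < y := hy.1
    have h1 : Real.exp (-c * y ^ (-α)) ≤ 1 := by
      apply Real.exp_le_one_iff.mpr
      have : 0 ≤ y ^ (-α) := (Real.rpow_pos_of_pos hy0 _).le
      nlinarith
    have h2 : 0 < Real.exp (-c * y ^ (-α)) := Real.exp_pos _
    rw [Real.norm_eq_abs, abs_mul, abs_of_pos h2, abs_of_pos hy0]
    nlinarith [hy.2]

lemma genExpInt_key (α c x : ℝ) (hα : 2 < α) (hc : 0 ≤ c) (hx : 0 < x) :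
    (2 / α) * x ^ 2 * genExpInt (1 + 2 / α) (c * x ^ (-α)) =
      2 * ∫ y in (0:ℝ)..x, Real.exp (-c * y ^ (-α)) * y := by
  have hα0 : 0 < α := by linarith
  set φ : ℝ → ℝ := fun y => x ^ α * y ^ (-α) with hφ
  set φ' : ℝ → ℝ := fun y => x ^ α * (-α * y ^ (-α - 1)) with hφ'
  have himg : φ '' Set.Ioo 0 x = Set.Ioi 1 := by
    ext t
    constructor
    · rintro ⟨y, ⟨hy0, hyx⟩, rfl⟩
      have h1 : x ^ α * y ^ (-α) = (x / y) ^ α := by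
        rw [Real.div_rpow hx.le hy0.le, Real.rpow_neg hy0.le, div_eq_mul_inv]
      have h2 : (1:ℝ) < x / y := (one_lt_div hy0).mpr hyx
      have := Real.one_lt_rpow_iff_of_pos (by positivity : (0:ℝ) < x / y) (y := α) |>.mpr
        (Or.inl ⟨h2, hα0⟩)
      simpa [φ, h1] using this
    · intro ht
      have ht1 : (1:ℝ) < t := ht
      have ht0 : (0:ℝ) < t := by linarith
      refine ⟨x * t ^ (-(1/α)), ⟨by positivity, ?_⟩, ?_⟩
      · have : t ^ (-(1/α)) < 1 :=
          Real.rpow_lt_one_of_one_lt_of_neg ht1 (neg_lt_zero.mpr (by positivity))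
        nlinarith [hx]
      · show x ^ α * (x * t ^ (-(1/α))) ^ (-α) = t
        rw [Real.mul_rpow hx.le (Real.rpow_pos_of_pos ht0 _).le,
          ← Real.rpow_mul ht0.le, ← mul_assoc, ← Real.rpow_add hx]
        have h1 : α + -α = 0 := by ring
        have h2 : -(1/α) * -α = 1 := by field_simp
        rw [h1, h2, Real.rpow_zero, Real.rpow_one, one_mul]
  have hderiv : ∀ y ∈ Set.Ioo (0:ℝ) x, HasDerivWithinAt φ (φ' y) (Set.Ioo 0 x) y := by
    intro y hy
    have h := (Real.hasDerivAt_rpow_const (p := -α) (Or.inl hy.1.ne')).const_mul (x ^ α)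
    exact h.hasDerivWithinAt
  have hinj : Set.InjOn φ (Set.Ioo 0 x) := by
    have hanti : StrictAntiOn φ (Set.Ioo 0 x) := by
      intro y1 h1 y2 h2 h12
      have hp : y1 ^ α < y2 ^ α := Real.rpow_lt_rpow h1.1.le h12 hα0
      have hlt : y2 ^ (-α) < y1 ^ (-α) := by
        rw [Real.rpow_neg h1.1.le, Real.rpow_neg h2.1.le]
        exact inv_strictAnti₀ (Real.rpow_pos_of_pos h1.1 _) hp
      exact mul_lt_mul_of_pos_left hlt (Real.rpow_pos_of_pos hx _)
    exact hanti.injOn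
  have key : genExpInt (1 + 2/α) (c * x ^ (-α)) =
      ∫ y in Set.Ioo (0:ℝ) x,
        |φ' y| • (Real.exp (-(c * x ^ (-α)) * φ y) * (φ y) ^ (-(1 + 2/α))) := by
    rw [genExpInt, ← himg]
    exact integral_image_eq_integral_abs_deriv_smul measurableSet_Ioo hderiv hinj _
  have hcongr : Set.EqOn
      (fun y => |φ' y| • (Real.exp (-(c * x ^ (-α)) * φ y) * (φ y) ^ (-(1 + 2/α))))
      (fun y => (α / x ^ 2) * (Real.exp (-c * y ^ (-α)) * y)) (Set.Ioo 0 x) := by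
    intro y hy
    have hy0 : 0 < y := hy.1
    have habs : |φ' y| = α * (x ^ α * y ^ (-α - 1)) := by
      show |x ^ α * (-α * y ^ (-α - 1))| = _
      rw [abs_mul, abs_mul, abs_of_pos (Real.rpow_pos_of_pos hx α),
        abs_of_pos (Real.rpow_pos_of_pos hy0 _), abs_neg, abs_of_pos hα0]
      ring
    have hxx : x ^ (-α) * x ^ α = 1 := by
      rw [← Real.rpow_add hx]; norm_num
    have hexp : -(c * x ^ (-α)) * φ y = -c * y ^ (-α) := by
      show -(c * x ^ (-α)) * (x ^ α * y ^ (-α)) = _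
      calc -(c * x ^ (-α)) * (x ^ α * y ^ (-α))
          = -c * y ^ (-α) * (x ^ (-α) * x ^ α) := by ring
        _ = -c * y ^ (-α) := by rw [hxx, mul_one]
    have hpow : (φ y) ^ (-(1 + 2/α)) = x ^ (-(α + 2)) * y ^ (α + 2) := by
      show (x ^ α * y ^ (-α)) ^ (-(1 + 2/α)) = _
      rw [Real.mul_rpow (Real.rpow_pos_of_pos hx _).le (Real.rpow_pos_of_pos hy0 _).le,
        ← Real.rpow_mul hx.le, ← Real.rpow_mul hy0.le]
      have e1 : α * -(1 + 2/α) = -(α + 2) := by field_simp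
      have e2 : -α * -(1 + 2/α) = α + 2 := by field_simp
      rw [e1, e2]
    have hx2 : x ^ (-(2:ℝ)) = (x ^ 2)⁻¹ := by
      rw [show (-(2:ℝ)) = ((-2 : ℤ) : ℝ) by norm_num, Real.rpow_intCast, zpow_neg]
      rw [zpow_two, sq]
    show |φ' y| • (Real.exp (-(c * x ^ (-α)) * φ y) * (φ y) ^ (-(1 + 2/α)))
        = (α / x ^ 2) * (Real.exp (-c * y ^ (-α)) * y)
    rw [smul_eq_mul, habs, hexp, hpow]
    calc α * (x ^ α * y ^ (-α - 1)) * (Real.exp (-c * y ^ (-α)) * (x ^ (-(α + 2)) * y ^ (α + 2)))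
        = α * (x ^ α * x ^ (-(α + 2))) * (y ^ (-α - 1) * y ^ (α + 2))
            * Real.exp (-c * y ^ (-α)) := by ring
      _ = (α / x ^ 2) * (Real.exp (-c * y ^ (-α)) * y) := by
          rw [← Real.rpow_add hx, ← Real.rpow_add hy0,
            show α + -(α + 2) = (-2:ℝ) by ring, show -α - 1 + (α + 2) = (1:ℝ) by ring,
            Real.rpow_one, hx2]
          field_simp
  rw [key, setIntegral_congr_fun measurableSet_Ioo hcongr, MeasureTheory.integral_const_mul,
    intervalIntegral.integral_of_le hx.le, MeasureTheory.integral_Ioc_eq_integral_Ioo]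
  field_simp

theorem laplace_interference_integral (α δ g s κ R : ℝ)
    (hα : 2 < α) (hδ : δ = 2 / α) (hg : 0 ≤ g) (hs : 0 < s)
    (hκ : 0 < κ) (hκR : κ < R) :
    2 * ∫ x in κ..R, (1 - Real.exp (-s * g * x ^ (-α))) * x =
      R ^ 2 - κ ^ 2 + δ * κ ^ 2 * genExpInt (1 + δ) (s * κ ^ (-α) * g)
        - δ * R ^ 2 * genExpInt (1 + δ) (s * R ^ (-α) * g) := by
  subst hδ
  have hα0 : 0 < α := by linarith
  have hc : 0 ≤ s * g := by positivity
  have hR : 0 < R := hκ.trans hκR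
  have hkey : ∀ x : ℝ, 0 < x → (2/α) * x ^ 2 * genExpInt (1 + 2/α) (s * x ^ (-α) * g)
      = 2 * ∫ y in (0:ℝ)..x, Real.exp (-(s*g) * y ^ (-α)) * y := by
    intro x hx
    rw [show s * x ^ (-α) * g = s * g * x ^ (-α) by ring]
    exact genExpInt_key α (s*g) x hα hc hx
  have hiκ := exp_mul_intervalIntegrable α (s*g) κ hc hκ
  have hiR := exp_mul_intervalIntegrable α (s*g) R hc hR
  have hiκR : IntervalIntegrable (fun y : ℝ => Real.exp (-(s*g) * y ^ (-α)) * y) volume κ R :=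
    hiκ.symm.trans hiR
  have hadj : (∫ y in (0:ℝ)..κ, Real.exp (-(s*g) * y ^ (-α)) * y)
      + ∫ y in κ..R, Real.exp (-(s*g) * y ^ (-α)) * y
      = ∫ y in (0:ℝ)..R, Real.exp (-(s*g) * y ^ (-α)) * y :=
    intervalIntegral.integral_add_adjacent_intervals hiκ hiκR
  have hsplit : ∫ x in κ..R, (1 - Real.exp (-s * g * x ^ (-α))) * x
      = (∫ x in κ..R, x) - ∫ x in κ..R, Real.exp (-(s*g) * x ^ (-α)) * x := by
    rw [← intervalIntegral.integral_sub intervalIntegral.intervalIntegrable_id hiκR]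
    apply intervalIntegral.integral_congr
    intro x _
    show (1 - Real.exp (-s * g * x ^ (-α))) * x = x - Real.exp (-(s*g) * x ^ (-α)) * x
    have harg : -s * g * x ^ (-α) = -(s*g) * x ^ (-α) := by ring
    rw [harg]; ring
  rw [hsplit, integral_id]
  have e1 := hkey κ hκ
  have e2 := hkey R hR
  linarith [hadj, e1, e2]
end

section
/- Fix an integer M ≥ 1 and reals c₀ < 0 and c₁, …, c_{M−1} ≥ 0 with μ := −∑_{n=0}^{M−1} c_n > 0. Let C_M be the associated M×M lower triangular Toeplitz matrix. Then as N → ∞, 1 − ‖exp((1/N)·C_M)‖_1 = μ/N + O(1/N²); in particular the outage probability 1 − ‖exp((1/N)C_M)‖_1 is asymptotically equivalent to μ/N. -/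
open Real Matrix NormedSpace Filter Asymptotics

/-- The `M × M` lower triangular Toeplitz matrix generated by `c 0, …, c (M−1)`. -/
def toeplitzLT (M : ℕ) (c : ℕ → ℝ) : Matrix (Fin M) (Fin M) ℝ :=
  fun i j => if (j : ℕ) ≤ (i : ℕ) then c ((i : ℕ) - (j : ℕ)) else 0

/-- The induced ℓ1 norm (maximum absolute column sum) of a real matrix. -/
noncomputable def inducedL1Norm {M : ℕ} (A : Matrix (Fin M) (Fin M) ℝ) : ℝ :=
  ⨆ j : Fin M, ∑ i : Fin M, |A i j|

namespace AsympAux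

variable {m : ℕ}

/-- Lower-triangular Toeplitz predicate. -/
def IsLT (A : Matrix (Fin (m+1)) (Fin (m+1)) ℝ) : Prop :=
  (∀ i j : Fin (m+1), (i:ℕ) < (j:ℕ) → A i j = 0) ∧
  ∀ i j : Fin m, A i.succ j.succ = A i.castSucc j.castSucc

lemma isLT_zero : IsLT (0 : Matrix (Fin (m+1)) (Fin (m+1)) ℝ) :=
  ⟨fun _ _ _ => rfl, fun _ _ => rfl⟩

lemma isLT_one : IsLT (1 : Matrix (Fin (m+1)) (Fin (m+1)) ℝ) := by
  constructor
  · intro i j hij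
    rw [Matrix.one_apply_ne (by intro h; subst h; omega)]
  · intro i j
    simp [Matrix.one_apply, Fin.ext_iff]

lemma isLT_add {A B : Matrix (Fin (m+1)) (Fin (m+1)) ℝ} (hA : IsLT A) (hB : IsLT B) :
    IsLT (A + B) := by
  refine ⟨fun i j h => ?_, fun i j => ?_⟩
  · simp [Matrix.add_apply, hA.1 i j h, hB.1 i j h]
  · simp [Matrix.add_apply, hA.2 i j, hB.2 i j]

lemma isLT_smul (r : ℝ) {A : Matrix (Fin (m+1)) (Fin (m+1)) ℝ} (hA : IsLT A) :
    IsLT (r • A) := by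
  refine ⟨fun i j h => ?_, fun i j => ?_⟩
  · simp [Matrix.smul_apply, hA.1 i j h]
  · simp [Matrix.smul_apply, hA.2 i j]

lemma isLT_mul {A B : Matrix (Fin (m+1)) (Fin (m+1)) ℝ} (hA : IsLT A) (hB : IsLT B) :
    IsLT (A * B) := by
  constructor
  · intro i j hij
    rw [Matrix.mul_apply]
    refine Finset.sum_eq_zero fun l _ => ?_
    rcases lt_or_ge (i:ℕ) (l:ℕ) with h | h
    · rw [hA.1 i l h, zero_mul]
    · rw [hB.1 l j (lt_of_le_of_lt h hij), mul_zero]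
  · intro i j
    rw [Matrix.mul_apply, Matrix.mul_apply, Fin.sum_univ_succ, Fin.sum_univ_castSucc]
    have h0 : B 0 j.succ = 0 := hB.1 _ _ (by simp)
    have hlast : A i.castSucc (Fin.last m) = 0 := hA.1 _ _ (by simpa using i.isLt)
    rw [h0, mul_zero, zero_add, hlast, zero_mul, add_zero]
    refine Finset.sum_congr rfl fun l _ => ?_
    rw [hA.2 i l, hB.2 l j]

lemma isLT_pow {A : Matrix (Fin (m+1)) (Fin (m+1)) ℝ} (hA : IsLT A) (n : ℕ) :
    IsLT (A ^ n) := by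
  induction n with
  | zero => simpa using isLT_one
  | succ n ih => rw [pow_succ]; exact isLT_mul ih hA

lemma isLT_sum {ι : Type*} (s : Finset ι) (f : ι → Matrix (Fin (m+1)) (Fin (m+1)) ℝ)
    (h : ∀ i ∈ s, IsLT (f i)) : IsLT (∑ i ∈ s, f i) := by
  classical
  induction s using Finset.induction_on with
  | empty => simpa using isLT_zero
  | @insert a s' hnot ih =>
    rw [Finset.sum_insert hnot]
    exact isLT_add (h a (Finset.mem_insert_self a s'))
      (ih fun i hi => h i (Finset.mem_insert_of_mem hi))

lemma isClosed_isLT : IsClosed {A : Matrix (Fin (m+1)) (Fin (m+1)) ℝ | IsLT A} := by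
  have h1 : IsClosed {A : Matrix (Fin (m+1)) (Fin (m+1)) ℝ |
      ∀ i j : Fin (m+1), (i:ℕ) < (j:ℕ) → A i j = 0} := by
    have : {A : Matrix (Fin (m+1)) (Fin (m+1)) ℝ |
        ∀ i j : Fin (m+1), (i:ℕ) < (j:ℕ) → A i j = 0} =
        ⋂ (i : Fin (m+1)) (j : Fin (m+1)) (_ : (i:ℕ) < (j:ℕ)),
          {A : Matrix (Fin (m+1)) (Fin (m+1)) ℝ | A i j = 0} := by
      ext A; simp [Set.mem_iInter]
    rw [this]
    exact isClosed_iInter fun i => isClosed_iInter fun j => isClosed_iInter fun _ =>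
      isClosed_eq (continuous_id.matrix_elem i j) continuous_const
  have h2 : IsClosed {A : Matrix (Fin (m+1)) (Fin (m+1)) ℝ |
      ∀ i j : Fin m, A i.succ j.succ = A i.castSucc j.castSucc} := by
    have : {A : Matrix (Fin (m+1)) (Fin (m+1)) ℝ |
        ∀ i j : Fin m, A i.succ j.succ = A i.castSucc j.castSucc} =
        ⋂ (i : Fin m) (j : Fin m),
          {A : Matrix (Fin (m+1)) (Fin (m+1)) ℝ | A i.succ j.succ = A i.castSucc j.castSucc} := by
      ext A; simp [Set.mem_iInter]
    rw [this]
    exact isClosed_iInter fun i => isClosed_iInter fun j =>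
      isClosed_eq (continuous_id.matrix_elem _ _) (continuous_id.matrix_elem _ _)
  exact h1.inter h2

section Exp
variable {m : ℕ}

lemma summable_expSeries (A : Matrix (Fin (m+1)) (Fin (m+1)) ℝ) :
    Summable (fun n : ℕ => ((Nat.factorial n : ℝ))⁻¹ • A ^ n) := by
  letI : SeminormedRing (Matrix (Fin (m+1)) (Fin (m+1)) ℝ) := Matrix.linftyOpSemiNormedRing
  letI : NormedRing (Matrix (Fin (m+1)) (Fin (m+1)) ℝ) := Matrix.linftyOpNormedRing
  letI : NormedAlgebra ℝ (Matrix (Fin (m+1)) (Fin (m+1)) ℝ) := Matrix.linftyOpNormedAlgebra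
  exact expSeries_summable' (𝕂 := ℝ) A

lemma isLT_exp {A : Matrix (Fin (m+1)) (Fin (m+1)) ℝ} (hA : IsLT A) : IsLT (exp A) := by
  have hsum : HasSum (fun n : ℕ => ((Nat.factorial n : ℝ))⁻¹ • A ^ n) (exp A) := by
    rw [exp_eq_tsum ℝ]
    exact (summable_expSeries A).hasSum
  refine isClosed_isLT.mem_of_tendsto hsum (Filter.Eventually.of_forall fun s => ?_)
  exact isLT_sum s _ fun n _ => isLT_smul _ (isLT_pow hA n)

/-- The entry evaluation continuous linear map. -/
noncomputable def entryCLM (i j : Fin (m+1)) : Matrix (Fin (m+1)) (Fin (m+1)) ℝ →L[ℝ] ℝ :=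
  (ContinuousLinearMap.proj (R := ℝ) (φ := fun _ : Fin (m+1) => ℝ) j).comp
    (ContinuousLinearMap.proj (R := ℝ) (φ := fun _ : Fin (m+1) => Fin (m+1) → ℝ) i)

@[simp] lemma entryCLM_apply (i j : Fin (m+1)) (A : Matrix (Fin (m+1)) (Fin (m+1)) ℝ) :
    entryCLM i j A = A i j := rfl

lemma exp_entry (A : Matrix (Fin (m+1)) (Fin (m+1)) ℝ) (i j : Fin (m+1)) :
    exp A i j = ∑' n : ℕ, ((Nat.factorial n : ℝ))⁻¹ * (A ^ n) i j := by
  have : exp A i j = entryCLM i j (∑' n : ℕ, ((Nat.factorial n : ℝ))⁻¹ • A ^ n) := by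
    rw [exp_eq_tsum ℝ]; rfl
  rw [this, ContinuousLinearMap.map_tsum _ (summable_expSeries A)]
  simp [smul_eq_mul]

lemma summable_exp_entry (A : Matrix (Fin (m+1)) (Fin (m+1)) ℝ) (i j : Fin (m+1)) :
    Summable (fun n : ℕ => ((Nat.factorial n : ℝ))⁻¹ * (A ^ n) i j) := by
  have := (summable_expSeries A).map (entryCLM i j : _ →ₗ[ℝ] ℝ) (entryCLM i j).continuous
  simpa [smul_eq_mul, Function.comp_def] using this

lemma pow_entry_nonneg {A : Matrix (Fin (m+1)) (Fin (m+1)) ℝ}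
    (hA : ∀ i j, 0 ≤ A i j) (n : ℕ) (i j : Fin (m+1)) : 0 ≤ (A ^ n) i j := by
  induction n generalizing i j with
  | zero =>
    rw [pow_zero, Matrix.one_apply]
    split <;> norm_num
  | succ n ih =>
    rw [pow_succ, Matrix.mul_apply]
    exact Finset.sum_nonneg fun l _ => mul_nonneg (ih i l) (hA l j)

lemma exp_entry_nonneg {A : Matrix (Fin (m+1)) (Fin (m+1)) ℝ}
    (hA : ∀ i j, 0 ≤ A i j) (i j : Fin (m+1)) : 0 ≤ exp A i j := by
  rw [exp_entry]
  refine tsum_nonneg fun n => mul_nonneg (by positivity) (pow_entry_nonneg hA n i j)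

lemma exp_smul_one (r : ℝ) :
    exp (r • (1 : Matrix (Fin (m+1)) (Fin (m+1)) ℝ)) = Real.exp r • 1 := by
  rw [Matrix.smul_one_eq_diagonal, Matrix.exp_diagonal, Matrix.smul_one_eq_diagonal,
    Real.exp_eq_exp_ℝ, Pi.exp_def]

end Exp

section Toeplitz
variable {m : ℕ}

lemma isLT_entry {A : Matrix (Fin (m+1)) (Fin (m+1)) ℝ} (hA : IsLT A) :
    ∀ (k : ℕ) (i j : Fin (m+1)), (j:ℕ) = k → (j:ℕ) ≤ (i:ℕ) →
      A i j = A ⟨(i:ℕ) - (j:ℕ), lt_of_le_of_lt (Nat.sub_le _ _) i.isLt⟩ (0 : Fin (m+1)) := by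
  intro k
  induction k with
  | zero =>
    intro i j hj hle
    have hj0 : j = 0 := Fin.ext (by simpa using hj)
    subst hj0
    congr 1
    try exact Fin.ext (by simp)
  | succ k ih =>
    intro i j hj hle
    have hjm := j.isLt
    have him := i.isLt
    set i' : Fin m := ⟨(i:ℕ) - 1, by omega⟩ with hi'
    set j' : Fin m := ⟨k, by omega⟩ with hj'
    have hi : i = i'.succ := Fin.ext (by simp [hi']; omega)
    have hjj : j = j'.succ := Fin.ext (by simp [hj']; omega)
    rw [hi, hjj, hA.2 i' j']
    have hres := ih i'.castSucc j'.castSucc (by simp [hj']) (by simp [hi', hj']; omega)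
    rw [hres]
    congr 1
    exact Fin.ext (by simp [hi', hj']; try omega)

lemma isLT_entry' {A : Matrix (Fin (m+1)) (Fin (m+1)) ℝ} (hA : IsLT A)
    (i j : Fin (m+1)) (h : (j:ℕ) ≤ (i:ℕ)) :
    A i j = A ⟨(i:ℕ) - (j:ℕ), lt_of_le_of_lt (Nat.sub_le _ _) i.isLt⟩ (0 : Fin (m+1)) :=
  isLT_entry hA (j:ℕ) i j rfl h

lemma isLT_toeplitz (c : ℕ → ℝ) : IsLT (toeplitzLT (m+1) c) := by
  constructor
  · intro i j hij
    rw [toeplitzLT, if_neg (by omega)]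
  · intro i j
    simp only [toeplitzLT, Fin.val_succ, Fin.coe_castSucc, Nat.succ_sub_succ,
      Nat.add_le_add_iff_right]

lemma exp_smul_toeplitz_nonneg (c : ℕ → ℝ) (hck : ∀ k, 1 ≤ k → k ≤ m → 0 ≤ c k)
    {t : ℝ} (ht : 0 ≤ t) (i j : Fin (m+1)) :
    0 ≤ exp (t • toeplitzLT (m+1) c) i j := by
  set C := toeplitzLT (m+1) c with hC
  set B := t • C - (t * c 0) • (1 : Matrix (Fin (m+1)) (Fin (m+1)) ℝ) with hB
  have hsplit : t • C = (t * c 0) • (1 : Matrix (Fin (m+1)) (Fin (m+1)) ℝ) + B := by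
    rw [hB]; module
  have hBnonneg : ∀ i j, 0 ≤ B i j := by
    intro i j
    by_cases hij : i = j
    · subst hij
      have : C i i = c 0 := by
        rw [hC]; simp [toeplitzLT]
      simp [hB, Matrix.sub_apply, Matrix.smul_apply, Matrix.one_apply_eq, this, smul_eq_mul]
    · have h1 : (1 : Matrix (Fin (m+1)) (Fin (m+1)) ℝ) i j = 0 := Matrix.one_apply_ne hij
      have hBij : B i j = t * C i j := by
        simp [hB, Matrix.sub_apply, Matrix.smul_apply, h1, smul_eq_mul]
      rw [hBij]
      rcases lt_or_ge (i:ℕ) (j:ℕ) with h | h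
      · rw [hC]; rw [show toeplitzLT (m+1) c i j = 0 from by rw [toeplitzLT, if_neg (by omega)]]
        simp
      · have hlt : (j:ℕ) < (i:ℕ) := by
          rcases lt_or_eq_of_le h with h' | h'
          · exact h'
          · exact absurd (Fin.ext h'.symm) hij
        have : C i j = c ((i:ℕ) - (j:ℕ)) := by
          rw [hC, toeplitzLT, if_pos (le_of_lt hlt)]
        rw [this]
        have := i.isLt
        exact mul_nonneg ht (hck _ (by omega) (by omega))
  have hcomm : Commute ((t * c 0) • (1 : Matrix (Fin (m+1)) (Fin (m+1)) ℝ)) B :=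
    (Commute.one_left B).smul_left _
  have hfact : exp (t • C) = Real.exp (t * c 0) • exp B := by
    rw [hsplit, Matrix.exp_add_of_commute _ _ hcomm, exp_smul_one, smul_mul_assoc, one_mul]
  rw [hfact, Matrix.smul_apply, smul_eq_mul]
  exact mul_nonneg (Real.exp_nonneg _) (exp_entry_nonneg hBnonneg i j)

lemma inducedL1Norm_exp_eq (c : ℕ → ℝ) (hck : ∀ k, 1 ≤ k → k ≤ m → 0 ≤ c k)
    {t : ℝ} (ht : 0 ≤ t) :
    inducedL1Norm (exp (t • toeplitzLT (m+1) c)) =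
      ∑ i : Fin (m+1), exp (t • toeplitzLT (m+1) c) i (0 : Fin (m+1)) := by
  set E := exp (t • toeplitzLT (m+1) c) with hE
  have hnn : ∀ i j, 0 ≤ E i j := fun i j => exp_smul_toeplitz_nonneg c hck ht i j
  have hLT : IsLT E := isLT_exp (isLT_smul t (isLT_toeplitz c))
  have hcol0 : ∑ i, |E i (0 : Fin (m+1))| = ∑ i, E i (0 : Fin (m+1)) :=
    Finset.sum_congr rfl fun i _ => abs_of_nonneg (hnn i 0)
  have hle : ∀ j : Fin (m+1), (∑ i, |E i j|) ≤ ∑ i, E i (0 : Fin (m+1)) := by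
    intro j
    have h1 : ∀ i : Fin (m+1), |E i j| =
        if (j:ℕ) ≤ (i:ℕ) then
          E ⟨(i:ℕ) - (j:ℕ), lt_of_le_of_lt (Nat.sub_le _ _) i.isLt⟩ (0 : Fin (m+1)) else 0 := by
      intro i
      split
      · rw [isLT_entry' hLT i j ‹_›, abs_of_nonneg (hnn _ _)]
      · rw [hLT.1 i j (by omega), abs_zero]
    have h2 : ∑ i, |E i j| =
        ∑ i ∈ Finset.univ.filter (fun i : Fin (m+1) => (j:ℕ) ≤ (i:ℕ)),
          E ⟨(i:ℕ) - (j:ℕ), lt_of_le_of_lt (Nat.sub_le _ _) i.isLt⟩ (0 : Fin (m+1)) := by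
      rw [Finset.sum_filter]
      exact Finset.sum_congr rfl fun i _ => h1 i
    rw [h2]
    rw [← Finset.sum_image (g := fun i : Fin (m+1) =>
        (⟨(i:ℕ) - (j:ℕ), lt_of_le_of_lt (Nat.sub_le _ _) i.isLt⟩ : Fin (m+1)))
        (f := fun k => E k (0 : Fin (m+1))) ?_]
    · exact Finset.sum_le_sum_of_subset_of_nonneg (Finset.subset_univ _)
        (fun k _ _ => hnn k 0)
    · intro x hx y hy hxy
      simp only [Finset.mem_coe, Finset.mem_filter, Finset.mem_univ, true_and] at hx hy
      have := Fin.mk.injEq _ _ _ _ ▸ hxy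
      exact Fin.ext (by omega)
  unfold inducedL1Norm
  refine le_antisymm (ciSup_le hle) ?_
  rw [← hcol0]
  exact le_ciSup (f := fun j : Fin (m+1) => ∑ i, |E i j|)
    (Set.Finite.bddAbove (Set.finite_range _)) (0 : Fin (m+1))

end Toeplitz

section Expansion
variable {m : ℕ}

lemma pow_entry_abs_le (A : Matrix (Fin (m+1)) (Fin (m+1)) ℝ) (n : ℕ) (i j : Fin (m+1)) :
    |(A ^ n) i j| ≤ (∑ k : Fin (m+1), ∑ l : Fin (m+1), |A k l|) ^ n := by
  set S := ∑ k : Fin (m+1), ∑ l : Fin (m+1), |A k l| with hS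
  have hS0 : 0 ≤ S := Finset.sum_nonneg fun k _ => Finset.sum_nonneg fun l _ => abs_nonneg _
  induction n generalizing i j with
  | zero =>
    rw [pow_zero, pow_zero, Matrix.one_apply]
    split <;> simp
  | succ n ih =>
    rw [pow_succ, Matrix.mul_apply, pow_succ]
    calc |∑ l, (A ^ n) i l * A l j| ≤ ∑ l, |(A ^ n) i l * A l j| :=
          Finset.abs_sum_le_sum_abs _ _
      _ ≤ ∑ l, S ^ n * |A l j| := by
          refine Finset.sum_le_sum fun l _ => ?_
          rw [abs_mul]
          exact mul_le_mul_of_nonneg_right (ih i l) (abs_nonneg _)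
      _ = S ^ n * ∑ l, |A l j| := by rw [Finset.mul_sum]
      _ ≤ S ^ n * S := by
          refine mul_le_mul_of_nonneg_left ?_ (pow_nonneg hS0 n)
          rw [hS]
          refine Finset.sum_le_sum fun l _ => ?_
          exact Finset.single_le_sum (f := fun l' => |A l l'|)
            (fun l' _ => abs_nonneg _) (Finset.mem_univ j)

set_option maxHeartbeats 1000000 in
lemma expansion (m : ℕ) (c : ℕ → ℝ) :
    ∃ K : ℝ, 0 ≤ K ∧ ∀ t : ℝ, |t| ≤ 1 →
      |(∑ i : Fin (m+1), exp (t • toeplitzLT (m+1) c) i (0 : Fin (m+1))) - 1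
        - t * ∑ n ∈ Finset.range (m+1), c n| ≤ K * t ^ 2 := by
  set C := toeplitzLT (m+1) c with hC
  set S := ∑ k : Fin (m+1), ∑ l : Fin (m+1), |C k l| with hS
  have hS0 : 0 ≤ S := Finset.sum_nonneg fun k _ => Finset.sum_nonneg fun l _ => abs_nonneg _
  set g : ℕ → ℝ := fun n => (m+1 : ℝ) * (S ^ (n+2) / (Nat.factorial (n+2) : ℝ)) with hg
  have hgsum : Summable g :=
    ((summable_nat_add_iff 2).2 (Real.summable_pow_div_factorial S)).mul_left _
  refine ⟨∑' n, g n, tsum_nonneg (fun n => by positivity), fun t ht => ?_⟩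
  set a : ℕ → ℝ := fun n => ∑ i : Fin (m+1), (C ^ n) i (0 : Fin (m+1)) with ha
  have habound : ∀ n, |a n| ≤ (m+1 : ℝ) * S ^ n := by
    intro n
    calc |a n| ≤ ∑ i : Fin (m+1), |(C ^ n) i (0 : Fin (m+1))| :=
          Finset.abs_sum_le_sum_abs _ _
      _ ≤ ∑ _i : Fin (m+1), S ^ n := Finset.sum_le_sum fun i _ => pow_entry_abs_le C n i 0
      _ = (m+1 : ℝ) * S ^ n := by
          rw [Finset.sum_const, Finset.card_univ, Fintype.card_fin, nsmul_eq_mul]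
          push_cast; ring
  set f : ℕ → ℝ := fun n => ((Nat.factorial n : ℝ))⁻¹ * t ^ n * a n with hf
  have hfbound : ∀ n, |f n| ≤ |t| ^ n * ((m+1 : ℝ) * (S ^ n / (Nat.factorial n : ℝ))) := by
    intro n
    rw [hf]
    have h1 : |((Nat.factorial n : ℝ))⁻¹ * t ^ n * a n| =
        ((Nat.factorial n : ℝ))⁻¹ * |t| ^ n * |a n| := by
      rw [abs_mul, abs_mul, abs_pow, abs_of_nonneg (by positivity : (0:ℝ) ≤ ((Nat.factorial n : ℝ))⁻¹)]
    rw [h1]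
    calc ((Nat.factorial n : ℝ))⁻¹ * |t| ^ n * |a n|
        ≤ ((Nat.factorial n : ℝ))⁻¹ * |t| ^ n * ((m+1 : ℝ) * S ^ n) := by
          refine mul_le_mul_of_nonneg_left (habound n) (by positivity)
      _ = |t| ^ n * ((m+1 : ℝ) * (S ^ n / (Nat.factorial n : ℝ))) := by
          rw [div_eq_mul_inv]
          ring
  have hsummf : Summable f := by
    refine Summable.of_norm_bounded (g := fun n => (m+1 : ℝ) * (S ^ n / (Nat.factorial n : ℝ)))
      (((Real.summable_pow_div_factorial S).mul_left _)) (fun n => ?_)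
    rw [Real.norm_eq_abs]
    exact le_trans (hfbound n)
      (mul_le_of_le_one_left (by positivity) (pow_le_one₀ (abs_nonneg t) ht))
  have hFt : (∑ i : Fin (m+1), exp (t • C) i (0 : Fin (m+1))) = ∑' n, f n := by
    have h1 : ∀ i : Fin (m+1), exp (t • C) i (0 : Fin (m+1)) =
        ∑' n, ((Nat.factorial n : ℝ))⁻¹ * t ^ n * (C ^ n) i (0 : Fin (m+1)) := by
      intro i
      rw [exp_entry]
      congr 1
      funext n
      rw [smul_pow, Matrix.smul_apply, smul_eq_mul]
      ring
    have h2 : ∀ i : Fin (m+1), Summable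
        (fun n => ((Nat.factorial n : ℝ))⁻¹ * t ^ n * (C ^ n) i (0 : Fin (m+1))) := by
      intro i
      refine (summable_exp_entry (t • C) i 0).congr fun n => ?_
      rw [smul_pow, Matrix.smul_apply, smul_eq_mul]
      ring
    rw [Finset.sum_congr rfl (fun i _ => h1 i), ← Summable.tsum_finsetSum (fun i _ => h2 i)]
    refine tsum_congr fun n => ?_
    show ∑ i : Fin (m+1), ((Nat.factorial n : ℝ))⁻¹ * t ^ n * (C ^ n) i (0 : Fin (m+1)) =
      ((Nat.factorial n : ℝ))⁻¹ * t ^ n * ∑ i : Fin (m+1), (C ^ n) i (0 : Fin (m+1))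
    rw [Finset.mul_sum]
  have htail := Summable.sum_add_tsum_nat_add (f := f) 2 hsummf
  have ha0 : a 0 = 1 := by
    rw [ha]
    simp [Matrix.one_apply]
  have ha1 : a 1 = ∑ n ∈ Finset.range (m+1), c n := by
    rw [ha]
    simp only [pow_one]
    have : ∀ i : Fin (m+1), C i (0 : Fin (m+1)) = c (i : ℕ) := by
      intro i
      rw [hC]
      simp [toeplitzLT]
    rw [Finset.sum_congr rfl fun i _ => this i]
    exact Fin.sum_univ_eq_sum_range (fun n => c n) (m+1)
  have hf0 : f 0 = 1 := by rw [hf]; simp [ha0]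
  have hf1 : f 1 = t * ∑ n ∈ Finset.range (m+1), c n := by
    rw [hf]; simp [ha1, Nat.factorial]
  have hsum2 : ∑ i ∈ Finset.range 2, f i = 1 + t * ∑ n ∈ Finset.range (m+1), c n := by
    rw [Finset.sum_range_succ, Finset.sum_range_one, hf0, hf1]
  have hdiff : (∑ i : Fin (m+1), exp (t • C) i (0 : Fin (m+1))) - 1
      - t * ∑ n ∈ Finset.range (m+1), c n = ∑' n, f (n+2) := by
    rw [hFt, ← htail, hsum2]
    ring
  have ht2 : ∀ n : ℕ, ‖f (n+2)‖ ≤ g n * t ^ 2 := by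
    intro n
    rw [Real.norm_eq_abs]
    show |f (n+2)| ≤ (m+1 : ℝ) * (S ^ (n+2) / (Nat.factorial (n+2) : ℝ)) * t ^ 2
    refine le_trans (hfbound (n+2)) ?_
    have h3 : |t| ^ (n+2) = |t| ^ n * t ^ 2 := by
      rw [pow_add, sq_abs]
    rw [h3]
    have h4 : |t| ^ n ≤ 1 := pow_le_one₀ (abs_nonneg t) ht
    have h5 : (0:ℝ) ≤ (m+1 : ℝ) * (S ^ (n+2) / (Nat.factorial (n+2) : ℝ)) := by positivity
    calc |t| ^ n * t ^ 2 * ((m+1 : ℝ) * (S ^ (n+2) / (Nat.factorial (n+2) : ℝ)))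
        ≤ 1 * t ^ 2 * ((m+1 : ℝ) * (S ^ (n+2) / (Nat.factorial (n+2) : ℝ))) := by
          refine mul_le_mul_of_nonneg_right (mul_le_mul_of_nonneg_right h4 (sq_nonneg t)) h5
      _ = (m+1 : ℝ) * (S ^ (n+2) / (Nat.factorial (n+2) : ℝ)) * t ^ 2 := by ring
  rw [hdiff, ← Real.norm_eq_abs]
  exact tsum_of_norm_bounded (hgsum.hasSum.mul_right _) ht2

end Expansion

end AsympAux
set_option maxHeartbeats 1000000 in
theorem asymptotic_outage (M : ℕ) (hM : 1 ≤ M) (c : ℕ → ℝ)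
    (hc0 : c 0 < 0) (hck : ∀ k : ℕ, 1 ≤ k → k ≤ M - 1 → 0 ≤ c k)
    (hμ : 0 < -(∑ n ∈ Finset.range M, c n)) :
    ((fun N : ℕ => (1 - inducedL1Norm (exp ((1 / (N : ℝ)) • toeplitzLT M c))) -
        (-(∑ n ∈ Finset.range M, c n)) / N) =O[atTop]
      (fun N : ℕ => 1 / (N : ℝ) ^ 2)) ∧
    Tendsto (fun N : ℕ =>
        (1 - inducedL1Norm (exp ((1 / (N : ℝ)) • toeplitzLT M c))) /
          ((-(∑ n ∈ Finset.range M, c n)) / N))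
      atTop (nhds 1) := by
  obtain ⟨m, rfl⟩ : ∃ m, M = m + 1 := ⟨M - 1, by omega⟩
  obtain ⟨K, hK0, hKey⟩ := AsympAux.expansion m c
  have hck' : ∀ k, 1 ≤ k → k ≤ m → 0 ≤ c k := fun k h1 h2 => hck k h1 (by omega)
  set μ : ℝ := -(∑ n ∈ Finset.range (m+1), c n) with hμdef
  have hμpos : 0 < μ := hμ
  have hmain : ∀ N : ℕ, 1 ≤ N →
      |(1 - inducedL1Norm (exp ((1/(N:ℝ)) • toeplitzLT (m+1) c))) - μ / N| ≤ K / (N:ℝ)^2 := by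
    intro N hN
    have hN0 : (0:ℝ) < N := by exact_mod_cast hN
    have ht0 : (0:ℝ) ≤ 1/N := by positivity
    have ht1 : (1:ℝ)/N ≤ 1 := by
      rw [div_le_one hN0]; exact_mod_cast hN
    have habs : |(1:ℝ)/N| ≤ 1 := by rwa [abs_of_nonneg ht0]
    have hnorm := AsympAux.inducedL1Norm_exp_eq c hck' ht0
    have hexp := hKey (1/N) habs
    rw [hnorm]
    have heq : (1:ℝ) - (∑ i : Fin (m+1),
          exp ((1/(N:ℝ)) • toeplitzLT (m+1) c) i (0 : Fin (m+1))) - μ / N =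
        -((∑ i : Fin (m+1),
          exp ((1/(N:ℝ)) • toeplitzLT (m+1) c) i (0 : Fin (m+1))) - 1
          - (1/N) * ∑ n ∈ Finset.range (m+1), c n) := by
      rw [hμdef]; ring
    rw [heq, abs_neg]
    refine le_trans hexp (le_of_eq ?_)
    rw [div_pow, one_pow, div_eq_mul_inv, div_eq_mul_inv]; ring
  constructor
  · rw [isBigO_iff]
    refine ⟨K, ?_⟩
    filter_upwards [eventually_ge_atTop 1] with N hN
    have h := hmain N hN
    have hN0 : (0:ℝ) < N := by exact_mod_cast hN
    have h2 : ‖1 / (N:ℝ)^2‖ = 1/(N:ℝ)^2 := by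
      rw [Real.norm_eq_abs, abs_of_nonneg (by positivity)]
    rw [Real.norm_eq_abs, h2]
    calc |(1 - inducedL1Norm (exp ((1/(N:ℝ)) • toeplitzLT (m+1) c))) - μ / N|
        ≤ K / (N:ℝ)^2 := h
      _ = K * (1/(N:ℝ)^2) := by ring
  · have h0 : Tendsto (fun N : ℕ =>
        ((1 - inducedL1Norm (exp ((1/(N:ℝ)) • toeplitzLT (m+1) c))) - μ/N) / (μ/N))
        atTop (nhds (0:ℝ)) := by
      refine squeeze_zero_norm' (a := fun N : ℕ => (K/μ) * (1/(N:ℝ))) ?_ ?_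
      · filter_upwards [eventually_ge_atTop 1] with N hN
        have h := hmain N hN
        have hN0 : (0:ℝ) < N := by exact_mod_cast hN
        have hμN : (0:ℝ) < μ/N := by positivity
        rw [Real.norm_eq_abs, abs_div, abs_of_pos hμN, div_le_iff₀ hμN]
        refine le_trans h (le_of_eq ?_)
        field_simp
      · have h1 := tendsto_one_div_atTop_nhds_zero_nat (𝕜 := ℝ)
        have := h1.const_mul (K/μ)
        simpa using this
    have h1 : Tendsto (fun N : ℕ =>
        ((1 - inducedL1Norm (exp ((1/(N:ℝ)) • toeplitzLT (m+1) c))) - μ/N) / (μ/N) + 1)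
        atTop (nhds (1:ℝ)) := by
      have := h0.add (tendsto_const_nhds (x := (1:ℝ)) (f := atTop))
      simpa using this
    refine Tendsto.congr' ?_ h1
    filter_upwards [eventually_ge_atTop 1] with N hN
    have hN0 : (0:ℝ) < N := by exact_mod_cast hN
    have hμN : μ/(N:ℝ) ≠ 0 := by positivity
    field_simp
    ring
end
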